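/- Let f₀ : ℝ^n → ℝ∪{∞} and g : ℝ^m × ℝ^n → ℝ∪{∞} be proper and lsc, with g lsc jointly. Let p^ν, p ∈ Δ, ξ^ν → ξ in ℝ^{sm}, θ^ν, λ^ν → ∞, θ^ν‖p^ν−p‖₂² → 0, λ^ν‖ξ^ν−ξ‖₂² → 0. Define f((u,v),x) = f₀(x) + Σᵢ (pᵢ+uᵢ) g(ξᵢ+vᵢ, x) + ι_{{0}}(u) + ι_{{0}}(v) and f^ν((u,v),x) = f₀(x) + Σᵢ (pᵢ^ν+uᵢ) g(ξᵢ^ν+vᵢ, x) + (θ^ν/2)‖u‖₂² + (λ^ν/2)‖v‖₂² + ι_Δ(p^ν+u). Then f^ν epi-converges to f. -/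

import Mathlib

open Filter Topology
open scoped Classical

/-- Weighted sum `Σᵢ cᵢ aᵢ` of extended reals `aᵢ ∈ (−∞,∞]` with weights `cᵢ ∈ ℝ`, under the
conventions `0·∞ = 0` and `∞ − ∞ = ∞`. -/
noncomputable def wsumE {s : ℕ} (c : Fin s → ℝ) (a : Fin s → EReal) : EReal :=
  if ∃ i, c i ≠ 0 ∧ a i = ⊤ then ⊤ else ((∑ i, c i * (a i).toReal : ℝ) : EReal)

lemma wsumE_ne_bot {s : ℕ} (c : Fin s → ℝ) (a : Fin s → EReal) : wsumE c a ≠ ⊥ := by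
  unfold wsumE; split_ifs
  · exact top_ne_bot
  · exact EReal.coe_ne_bot _

lemma wsumE_ge {s : ℕ} (c : Fin s → ℝ) (a : Fin s → EReal) (b : Fin s → ℝ)
    (hc : ∀ i, 0 ≤ c i) (hb : ∀ i, (b i : EReal) ≤ a i) :
    ((∑ i, c i * b i : ℝ) : EReal) ≤ wsumE c a := by
  unfold wsumE
  split_ifs with h
  · exact le_top
  · push_neg at h
    rw [EReal.coe_le_coe_iff]
    refine Finset.sum_le_sum fun i _ => ?_
    rcases eq_or_ne (c i) 0 with h0 | h0
    · simp [h0]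
    · have hne : a i ≠ ⊤ := h i h0
      have hneb : a i ≠ ⊥ := ((EReal.bot_lt_coe (b i)).trans_le (hb i)).ne'
      have h1 : (b i : EReal) ≤ ((a i).toReal : EReal) := by
        rw [EReal.coe_toReal hne hneb]; exact hb i
      exact mul_le_mul_of_nonneg_left (EReal.coe_le_coe_iff.1 h1) (hc i)

lemma exists_lb {s : ℕ} (p : Fin s → ℝ) (a : Fin s → EReal) (β : ℝ)
    (hp0 : ∀ i, 0 ≤ p i) (hp1 : ∑ i, p i = 1) (ha : ∀ i, a i ≠ ⊥)
    (hβ : (β : EReal) < wsumE p a) :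
    ∃ b : Fin s → ℝ, (∀ i, (b i : EReal) < a i) ∧ β < ∑ i, p i * b i := by
  have hb0 : ∀ i, ∃ r : ℝ, (r : EReal) < a i := by
    intro i
    obtain ⟨r, _, hr2⟩ := EReal.exists_between_coe_real ((ha i).bot_lt)
    exact ⟨r, hr2⟩
  choose b0 hb0 using hb0
  by_cases htop : ∃ i, p i ≠ 0 ∧ a i = ⊤
  · obtain ⟨i₀, hpi₀, hai₀⟩ := htop
    have hpi₀' : 0 < p i₀ := (hp0 i₀).lt_of_ne (Ne.symm hpi₀)
    set S := ∑ i ∈ Finset.univ.erase i₀, p i * b0 i with hS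
    set q := (β + 1 - S) / p i₀ with hq
    refine ⟨Function.update b0 i₀ (max (b0 i₀) q), ?_, ?_⟩
    · intro i
      rcases eq_or_ne i i₀ with rfl | hne
      · rw [Function.update_self, hai₀]; exact EReal.coe_lt_top _
      · rw [Function.update_of_ne hne]; exact hb0 i
    · have hsum : ∑ i, p i * Function.update b0 i₀ (max (b0 i₀) q) i
          = p i₀ * max (b0 i₀) q + S := by
        rw [← Finset.add_sum_erase _ _ (Finset.mem_univ i₀), Function.update_self]
        congr 1
        refine Finset.sum_congr rfl fun i hi => ?_
        rw [Function.update_of_ne (Finset.ne_of_mem_erase hi)]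
      rw [hsum]
      have : p i₀ * q = β + 1 - S := by
        rw [hq, mul_div_cancel₀ _ hpi₀'.ne']
      nlinarith [mul_le_mul_of_nonneg_left (le_max_right (b0 i₀) q) hpi₀'.le]
  · have hR : (β : EReal) < ((∑ i, p i * (a i).toReal : ℝ) : EReal) := by
      rwa [wsumE, if_neg htop] at hβ
    rw [EReal.coe_lt_coe_iff] at hR
    set R := ∑ i, p i * (a i).toReal with hRdef
    push_neg at htop
    set δ := (R - β) / 2 with hδ
    have hδpos : 0 < δ := by simp only [hδ]; linarith
    refine ⟨fun i => if p i = 0 then b0 i else (a i).toReal - δ, ?_, ?_⟩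
    · intro i
      by_cases hpi : p i = 0
      · simpa [hpi] using hb0 i
      · simp only [hpi, if_false]
        have hne : a i ≠ ⊤ := htop i hpi
        calc (((a i).toReal - δ : ℝ) : EReal) < ((a i).toReal : EReal) :=
              EReal.coe_lt_coe_iff.2 (by linarith)
          _ = a i := EReal.coe_toReal hne (ha i)
    · have : ∑ i, p i * (if p i = 0 then b0 i else (a i).toReal - δ)
          = ∑ i, (p i * (a i).toReal - p i * δ) := by
        refine Finset.sum_congr rfl fun i _ => ?_
        by_cases hpi : p i = 0 <;> simp [hpi, mul_sub]
      rw [this, Finset.sum_sub_distrib, ← Finset.sum_mul, hp1]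
      simp only [one_mul, ← hRdef]
      linarith

lemma ereal_lt_add_split {A B c : EReal} (hA : A ≠ ⊥) (hB : B ≠ ⊥) (hc : c < A + B) :
    ∃ α β : ℝ, (α : EReal) < A ∧ (β : EReal) < B ∧ c ≤ ((α + β : ℝ) : EReal) := by
  obtain ⟨α0, _, hα0⟩ := EReal.exists_between_coe_real hA.bot_lt
  obtain ⟨β0, _, hβ0⟩ := EReal.exists_between_coe_real hB.bot_lt
  by_cases hAt : A = ⊤
  · have hcc : c < ⊤ := lt_of_lt_of_le hc le_top
    obtain ⟨r, hr1, _⟩ := EReal.exists_between_coe_real hcc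
    refine ⟨max α0 (r - β0), β0, ?_, hβ0, ?_⟩
    · rw [hAt]; exact EReal.coe_lt_top _
    · refine le_trans hr1.le (EReal.coe_le_coe_iff.2 ?_)
      have := le_max_right α0 (r - β0)
      linarith
  · by_cases hBt : B = ⊤
    · have hcc : c < ⊤ := lt_of_lt_of_le hc le_top
      obtain ⟨r, hr1, _⟩ := EReal.exists_between_coe_real hcc
      refine ⟨α0, max β0 (r - α0), hα0, ?_, ?_⟩
      · rw [hBt]; exact EReal.coe_lt_top _
      · refine le_trans hr1.le (EReal.coe_le_coe_iff.2 ?_)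
        have := le_max_right β0 (r - α0)
        linarith
    · lift A to ℝ using ⟨hAt, hA⟩
      lift B to ℝ using ⟨hBt, hB⟩
      rw [← EReal.coe_add] at hc
      obtain ⟨r, hr1, hr2⟩ := EReal.exists_between_coe_real hc
      rw [EReal.coe_lt_coe_iff] at hr2
      set ε := (A + B - r) / 2 with hε
      refine ⟨A - ε, B - ε, ?_, ?_, ?_⟩
      · rw [EReal.coe_lt_coe_iff]; simp only [hε]; linarith
      · rw [EReal.coe_lt_coe_iff]; simp only [hε]; linarith
      · refine le_trans hr1.le (EReal.coe_le_coe_iff.2 ?_)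
        simp only [hε]; linarith


/-- Epi-convergence with probability *and* support perturbations: with
`f((u,v),x) = f₀(x) + Σᵢ(pᵢ+uᵢ)g(ξᵢ+vᵢ,x) + ι_{{0}}(u) + ι_{{0}}(v)` and
`f^ν((u,v),x) = f₀(x) + Σᵢ(pᵢ^ν+uᵢ)g(ξᵢ^ν+vᵢ,x) + (θ^ν/2)‖u‖₂² + (λ^ν/2)‖v‖₂² + ι_Δ(p^ν+u)`,
if `θ^ν,λ^ν → ∞`, `θ^ν‖p^ν−p‖₂² → 0` and `λ^ν‖ξ^ν−ξ‖₂² → 0`, then `f^ν` epi-converges to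
`f`. -/
theorem stmt12 {s m n : ℕ}
    (f₀ : EuclideanSpace ℝ (Fin n) → EReal)
    (g : EuclideanSpace ℝ (Fin m) → EuclideanSpace ℝ (Fin n) → EReal)
    (hf₀proper : (∀ x, f₀ x ≠ ⊥) ∧ (∃ x, f₀ x ≠ ⊤)) (hf₀lsc : LowerSemicontinuous f₀)
    (hgproper : (∀ ξ x, g ξ x ≠ ⊥) ∧ (∃ ξ x, g ξ x ≠ ⊤))
    (hglsc : LowerSemicontinuous (fun q : EuclideanSpace ℝ (Fin m) × EuclideanSpace ℝ (Fin n)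
      => g q.1 q.2))
    (p : EuclideanSpace ℝ (Fin s)) (hp : (∀ i, 0 ≤ p i) ∧ ∑ i, p i = 1)
    (pν : ℕ → EuclideanSpace ℝ (Fin s)) (hpν : ∀ ν, (∀ i, 0 ≤ pν ν i) ∧ ∑ i, pν ν i = 1)
    (ξ : Fin s → EuclideanSpace ℝ (Fin m)) (ξν : ℕ → Fin s → EuclideanSpace ℝ (Fin m))
    (θν lamν : ℕ → ℝ) (hθnn : ∀ ν, 0 ≤ θν ν) (hlamnn : ∀ ν, 0 ≤ lamν ν)
    (hθ : Tendsto θν atTop atTop) (hlam : Tendsto lamν atTop atTop)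
    (hθp : Tendsto (fun ν => θν ν * ‖pν ν - p‖ ^ 2) atTop (𝓝 0))
    (hlamξ : Tendsto (fun ν => lamν ν * ∑ i, ‖ξν ν i - ξ i‖ ^ 2) atTop (𝓝 0)) :
    -- liminf condition of epi-convergence
    (∀ (u : EuclideanSpace ℝ (Fin s)) (v : Fin s → EuclideanSpace ℝ (Fin m))
       (x : EuclideanSpace ℝ (Fin n))
       (useq : ℕ → EuclideanSpace ℝ (Fin s)) (vseq : ℕ → Fin s → EuclideanSpace ℝ (Fin m))
       (xseq : ℕ → EuclideanSpace ℝ (Fin n)),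
       Tendsto useq atTop (𝓝 u) → Tendsto vseq atTop (𝓝 v) → Tendsto xseq atTop (𝓝 x) →
       (if u = 0 ∧ v = 0 then f₀ x + wsumE (fun i => p i) (fun i => g (ξ i + v i) x) else ⊤) ≤
         Filter.liminf (fun ν =>
           if (∀ i, 0 ≤ pν ν i + useq ν i) ∧ ∑ i, (pν ν i + useq ν i) = 1 then
             f₀ (xseq ν)
               + wsumE (fun i => pν ν i + useq ν i) (fun i => g (ξν ν i + vseq ν i) (xseq ν))
               + ((θν ν / 2 * ‖useq ν‖ ^ 2 : ℝ) : EReal)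
               + ((lamν ν / 2 * ∑ i, ‖vseq ν i‖ ^ 2 : ℝ) : EReal)
           else ⊤) atTop) ∧
    -- limsup (recovery sequence) condition of epi-convergence
    (∀ (u : EuclideanSpace ℝ (Fin s)) (v : Fin s → EuclideanSpace ℝ (Fin m))
       (x : EuclideanSpace ℝ (Fin n)),
       ∃ (useq : ℕ → EuclideanSpace ℝ (Fin s)) (vseq : ℕ → Fin s → EuclideanSpace ℝ (Fin m))
         (xseq : ℕ → EuclideanSpace ℝ (Fin n)),
         Tendsto useq atTop (𝓝 u) ∧ Tendsto vseq atTop (𝓝 v) ∧ Tendsto xseq atTop (𝓝 x) ∧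
         Filter.limsup (fun ν =>
           if (∀ i, 0 ≤ pν ν i + useq ν i) ∧ ∑ i, (pν ν i + useq ν i) = 1 then
             f₀ (xseq ν)
               + wsumE (fun i => pν ν i + useq ν i) (fun i => g (ξν ν i + vseq ν i) (xseq ν))
               + ((θν ν / 2 * ‖useq ν‖ ^ 2 : ℝ) : EReal)
               + ((lamν ν / 2 * ∑ i, ‖vseq ν i‖ ^ 2 : ℝ) : EReal)
           else ⊤) atTop ≤
         (if u = 0 ∧ v = 0 then f₀ x + wsumE (fun i => p i) (fun i => g (ξ i + v i) x)
          else ⊤)) := by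
  -- convergence of pν to p
  have hppnorm : Tendsto (fun ν => ‖pν ν - p‖ ^ 2) atTop (𝓝 0) := by
    have hev : ∀ᶠ ν in atTop, ‖pν ν - p‖ ^ 2 ≤ θν ν * ‖pν ν - p‖ ^ 2 := by
      filter_upwards [hθ.eventually_ge_atTop 1] with ν hν
      nlinarith [sq_nonneg ‖pν ν - p‖]
    exact tendsto_of_tendsto_of_tendsto_of_le_of_le' tendsto_const_nhds hθp
      (Eventually.of_forall fun ν => sq_nonneg _) hev
  have hpp : Tendsto pν atTop (𝓝 p) := by
    rw [tendsto_iff_norm_sub_tendsto_zero]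
    have := (Real.continuous_sqrt.tendsto 0).comp hppnorm
    simpa [Function.comp_def, Real.sqrt_sq_eq_abs, abs_norm] using this
  have hppi : ∀ i, Tendsto (fun ν => pν ν i) atTop (𝓝 (p i)) := fun i => by
    simpa [Function.comp_def] using ((EuclideanSpace.proj (𝕜 := ℝ) i).continuous.tendsto p).comp hpp
  -- convergence of ξν to ξ, coordinatewise
  have hξsq : ∀ i, Tendsto (fun ν => ‖ξν ν i - ξ i‖ ^ 2) atTop (𝓝 0) := by
    intro i
    have hev : ∀ᶠ ν in atTop, ‖ξν ν i - ξ i‖ ^ 2 ≤ lamν ν * ∑ j, ‖ξν ν j - ξ j‖ ^ 2 := by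
      filter_upwards [hlam.eventually_ge_atTop 1] with ν hν
      have h1 : ‖ξν ν i - ξ i‖ ^ 2 ≤ ∑ j, ‖ξν ν j - ξ j‖ ^ 2 :=
        Finset.single_le_sum (f := fun j => ‖ξν ν j - ξ j‖ ^ 2)
          (fun j _ => sq_nonneg _) (Finset.mem_univ i)
      nlinarith [Finset.sum_nonneg (fun j (_ : j ∈ Finset.univ) => sq_nonneg ‖ξν ν j - ξ j‖)]
    exact tendsto_of_tendsto_of_tendsto_of_le_of_le' tendsto_const_nhds hlamξ
      (Eventually.of_forall fun ν => sq_nonneg _) hev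
  have hξi : ∀ i, Tendsto (fun ν => ξν ν i) atTop (𝓝 (ξ i)) := by
    intro i
    rw [tendsto_iff_norm_sub_tendsto_zero]
    have := (Real.continuous_sqrt.tendsto 0).comp (hξsq i)
    simpa [Function.comp_def, Real.sqrt_sq_eq_abs, abs_norm] using this
  constructor
  · -- liminf condition
    intro u v x useq vseq xseq hu hv hx
    have hui : ∀ i, Tendsto (fun ν => useq ν i) atTop (𝓝 (u i)) := fun i => by
      simpa [Function.comp_def] using ((EuclideanSpace.proj (𝕜 := ℝ) i).continuous.tendsto u).comp hu
    have hvi : ∀ i, Tendsto (fun ν => vseq ν i) atTop (𝓝 (v i)) := fun i =>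
      tendsto_pi_nhds.1 hv i
    set a : Fin s → EReal := fun i => g (ξ i + v i) x with ha_def
    have ha : ∀ i, a i ≠ ⊥ := fun i => hgproper.1 _ _
    have Eg : ∀ b : Fin s → ℝ, (∀ i, (b i : EReal) < a i) →
        ∀ᶠ ν in atTop, ∀ i, (b i : EReal) < g (ξν ν i + vseq ν i) (xseq ν) := by
      intro b hb
      rw [eventually_all]
      intro i
      have harg : Tendsto (fun ν => ((ξν ν i + vseq ν i : EuclideanSpace ℝ (Fin m)), xseq ν))
          atTop (𝓝 (ξ i + v i, x)) := ((hξi i).add (hvi i)).prodMk_nhds hx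
      exact harg.eventually (hglsc (ξ i + v i, x) _ (hb i))
    have Esum : ∀ b : Fin s → ℝ, Tendsto (fun ν => ∑ i, (pν ν i + useq ν i) * b i) atTop
        (𝓝 (∑ i, (p i + u i) * b i)) := fun b =>
      tendsto_finset_sum _ fun i _ => ((hppi i).add (hui i)).mul_const (b i)
    have hAev : ∀ α : ℝ, (α : EReal) < f₀ x → ∀ᶠ ν in atTop, (α : EReal) < f₀ (xseq ν) :=
      fun α hα => hx.eventually (hf₀lsc x _ hα)
    rw [le_liminf_iff]
    intro c hc
    by_cases h0 : u = 0 ∧ v = 0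
    · rw [if_pos h0] at hc
      obtain ⟨hu0, hv0⟩ := h0
      obtain ⟨α, β, hα, hβ, hcle⟩ := ereal_lt_add_split (hf₀proper.1 x) (wsumE_ne_bot _ _) hc
      obtain ⟨b, hba, hbβ⟩ := exists_lb (fun i => p i) a β hp.1 hp.2 ha hβ
      have hsum' : Tendsto (fun ν => ∑ i, (pν ν i + useq ν i) * b i) atTop
          (𝓝 (∑ i, p i * b i)) := by
        have h1 := Esum b
        have h2 : ∀ i, p i + u i = p i := fun i => by rw [hu0]; show p i + 0 = p i; ring
        simpa [Finset.sum_congr rfl fun i (_ : i ∈ Finset.univ) =>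
          congrArg (· * b i) (h2 i)] using h1
      filter_upwards [hAev α hα, Eg b hba, hsum'.eventually (eventually_gt_nhds hbβ)]
        with ν h1 h2 h3
      split_ifs with hfeas
      · have hBν := wsumE_ge _ _ b hfeas.1 fun i => (h2 i).le
        calc c ≤ ((α + β : ℝ) : EReal) := hcle
          _ = (α : EReal) + (β : EReal) := EReal.coe_add _ _
          _ < f₀ (xseq ν) + wsumE (fun i => pν ν i + useq ν i)
                (fun i => g (ξν ν i + vseq ν i) (xseq ν)) :=
              EReal.add_lt_add h1 (lt_of_lt_of_le (EReal.coe_lt_coe_iff.2 h3) hBν)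
          _ ≤ f₀ (xseq ν) + wsumE (fun i => pν ν i + useq ν i)
                (fun i => g (ξν ν i + vseq ν i) (xseq ν))
                + ((θν ν / 2 * ‖useq ν‖ ^ 2 : ℝ) : EReal) :=
              le_add_of_nonneg_right (by
                rw [← EReal.coe_zero, EReal.coe_le_coe_iff]
                exact mul_nonneg (div_nonneg (hθnn ν) (by norm_num)) (sq_nonneg _))
          _ ≤ f₀ (xseq ν) + wsumE (fun i => pν ν i + useq ν i)
                (fun i => g (ξν ν i + vseq ν i) (xseq ν))
                + ((θν ν / 2 * ‖useq ν‖ ^ 2 : ℝ) : EReal)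
                + ((lamν ν / 2 * ∑ i, ‖vseq ν i‖ ^ 2 : ℝ) : EReal) :=
              le_add_of_nonneg_right (by
                rw [← EReal.coe_zero, EReal.coe_le_coe_iff]
                exact mul_nonneg (div_nonneg (hlamnn ν) (by norm_num))
                  (Finset.sum_nonneg fun i _ => sq_nonneg _))
      · exact lt_of_lt_of_le hc le_top
    · have hctop : c < ⊤ := by rw [if_neg h0] at hc; exact hc
      obtain ⟨r, hr1, _⟩ := EReal.exists_between_coe_real hctop
      obtain ⟨α, _, hα⟩ := EReal.exists_between_coe_real (hf₀proper.1 x).bot_lt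
      have hb0 : ∀ i, ∃ t : ℝ, (t : EReal) < a i := by
        intro i
        obtain ⟨t, _, ht⟩ := EReal.exists_between_coe_real (ha i).bot_lt
        exact ⟨t, ht⟩
      choose b hb using hb0
      set L := ∑ i, (p i + u i) * b i with hL
      set K := r + 1 - α - (L - 1) with hK
      have hPQ : Tendsto (fun ν => θν ν / 2 * ‖useq ν‖ ^ 2
          + lamν ν / 2 * ∑ i, ‖vseq ν i‖ ^ 2) atTop atTop := by
        rcases not_and_or.1 h0 with hun | hvn
        · refine Tendsto.atTop_add_nonneg ?_ fun ν =>
            mul_nonneg (div_nonneg (hlamnn ν) (by norm_num))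
              (Finset.sum_nonneg fun i _ => sq_nonneg _)
          exact (hθ.atTop_div_const two_pos).atTop_mul_pos
            (pow_pos (norm_pos_iff.2 hun) 2) (hu.norm.pow 2)
        · refine Tendsto.nonneg_add_atTop
            (fun ν => mul_nonneg (div_nonneg (hθnn ν) (by norm_num)) (sq_nonneg _)) ?_
          obtain ⟨i₀, hi₀⟩ := Function.ne_iff.1 hvn
          have hS : 0 < ∑ i, ‖v i‖ ^ 2 := by
            refine Finset.sum_pos' (fun i _ => sq_nonneg _) ⟨i₀, Finset.mem_univ i₀, ?_⟩
            have hvne : v i₀ ≠ 0 := by simpa using hi₀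
            exact pow_pos (norm_pos_iff.2 hvne) 2
          exact (hlam.atTop_div_const two_pos).atTop_mul_pos hS
            (tendsto_finset_sum _ fun i _ => (hvi i).norm.pow 2)
      have hKev := hPQ.eventually_ge_atTop K
      have hEL : ∀ᶠ ν in atTop, L - 1 < ∑ i, (pν ν i + useq ν i) * b i :=
        (Esum b).eventually (eventually_gt_nhds (by linarith))
      filter_upwards [hAev α hα, Eg b (fun i => hb i), hEL, hKev] with ν h1 h2 h3 h4
      split_ifs with hfeas
      · have hBν := wsumE_ge _ _ b hfeas.1 fun i => (h2 i).le
        have hval : ((α + (∑ i, (pν ν i + useq ν i) * b i) + θν ν / 2 * ‖useq ν‖ ^ 2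
              + lamν ν / 2 * ∑ i, ‖vseq ν i‖ ^ 2 : ℝ) : EReal)
            ≤ f₀ (xseq ν) + wsumE (fun i => pν ν i + useq ν i)
                (fun i => g (ξν ν i + vseq ν i) (xseq ν))
                + ((θν ν / 2 * ‖useq ν‖ ^ 2 : ℝ) : EReal)
                + ((lamν ν / 2 * ∑ i, ‖vseq ν i‖ ^ 2 : ℝ) : EReal) := by
          rw [EReal.coe_add, EReal.coe_add]
          exact add_le_add (add_le_add (by rw [EReal.coe_add]; exact add_le_add h1.le hBν)
            le_rfl) le_rfl
        refine lt_of_lt_of_le ?_ hval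
        refine lt_of_lt_of_le hr1 (EReal.coe_le_coe_iff.2 ?_)
        have hk : K ≤ θν ν / 2 * ‖useq ν‖ ^ 2 + lamν ν / 2 * ∑ i, ‖vseq ν i‖ ^ 2 := h4
        rw [hK] at hk
        linarith
      · exact hctop
  · -- limsup condition
    intro u v x
    by_cases h0 : u = 0 ∧ v = 0
    · obtain ⟨hu0, hv0⟩ := h0
      refine ⟨fun ν => p - pν ν, fun ν i => ξ i + v i - ξν ν i, fun _ => x, ?_, ?_,
        tendsto_const_nhds, ?_⟩
      · simpa [hu0] using (tendsto_const_nhds (x := p)).sub hpp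
      · refine tendsto_pi_nhds.2 fun i => ?_
        simpa using (tendsto_const_nhds (x := ξ i + v i)).sub (hξi i)
      · rw [if_pos ⟨hu0, hv0⟩]
        set T := f₀ x + wsumE (fun i => p i) (fun i => g (ξ i + v i) x) with hT
        have heq : (fun ν => if (∀ i, 0 ≤ pν ν i + (fun ν => p - pν ν) ν i)
              ∧ ∑ i, (pν ν i + (fun ν => p - pν ν) ν i) = 1 then
              f₀ ((fun _ => x) ν)
                + wsumE (fun i => pν ν i + (fun ν => p - pν ν) ν i)
                    (fun i => g (ξν ν i + (fun ν i => ξ i + v i - ξν ν i) ν i) ((fun _ => x) ν))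
                + ((θν ν / 2 * ‖(fun ν => p - pν ν) ν‖ ^ 2 : ℝ) : EReal)
                + ((lamν ν / 2 * ∑ i, ‖(fun ν i => ξ i + v i - ξν ν i) ν i‖ ^ 2 : ℝ) : EReal)
            else ⊤)
            = fun ν => T + ((θν ν / 2 * ‖p - pν ν‖ ^ 2 : ℝ) : EReal)
                + ((lamν ν / 2 * ∑ i, ‖ξ i + v i - ξν ν i‖ ^ 2 : ℝ) : EReal) := by
          funext ν
          simp only []
          have hwi : ∀ i, pν ν i + (p - pν ν) i = p i := fun i => by
            show pν ν i + (p i - pν ν i) = p i; ring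
          have hcond : (∀ i, 0 ≤ pν ν i + (p - pν ν) i)
              ∧ ∑ i, (pν ν i + (p - pν ν) i) = 1 := by
            constructor
            · intro i; rw [hwi i]; exact hp.1 i
            · rw [Finset.sum_congr rfl fun i _ => hwi i]; exact hp.2
          rw [if_pos hcond]
          have hw : (fun i => pν ν i + (p - pν ν) i) = fun i => p i := funext hwi
          have hargs : (fun i => g (ξν ν i + (ξ i + v i - ξν ν i)) x)
              = fun i => g (ξ i + v i) x := by
            funext i
            congr 1
            abel
          rw [hw, hargs, hT]
        rw [limsup_congr (Eventually.of_forall fun ν => congrFun heq ν)]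
        by_cases hTt : T = ⊤
        · rw [hTt]
          simp
        · have hTb : T ≠ ⊥ := by
            rw [hT, Ne, EReal.add_eq_bot_iff]
            push_neg
            exact ⟨hf₀proper.1 x, wsumE_ne_bot _ _⟩
          have t1 : Tendsto (fun ν => θν ν / 2 * ‖p - pν ν‖ ^ 2) atTop (𝓝 0) := by
            have h1 := hθp.div_const (2 : ℝ)
            rw [zero_div] at h1
            have h2 : (fun ν => θν ν / 2 * ‖p - pν ν‖ ^ 2)
                = fun ν => θν ν * ‖pν ν - p‖ ^ 2 / 2 := by
              funext ν; rw [norm_sub_rev]; ring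
            rw [h2]; exact h1
          have t2 : Tendsto (fun ν => lamν ν / 2 * ∑ i, ‖ξ i + v i - ξν ν i‖ ^ 2)
              atTop (𝓝 0) := by
            have h1 := hlamξ.div_const (2 : ℝ)
            rw [zero_div] at h1
            have h2 : (fun ν => lamν ν / 2 * ∑ i, ‖ξ i + v i - ξν ν i‖ ^ 2)
                = fun ν => lamν ν * (∑ i, ‖ξν ν i - ξ i‖ ^ 2) / 2 := by
              funext ν
              have h3 : ∀ i, ‖ξ i + v i - ξν ν i‖ = ‖ξν ν i - ξ i‖ := fun i => by
                have hv0i : v i = 0 := by rw [hv0]; rfl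
                rw [hv0i, show ξ i + (0 : EuclideanSpace ℝ (Fin m)) - ξν ν i
                  = -(ξν ν i - ξ i) from by abel, norm_neg]
              rw [Finset.sum_congr rfl fun i _ => by rw [h3 i]]
              ring
            rw [h2]; exact h1
          have htend : Tendsto (fun ν => T + ((θν ν / 2 * ‖p - pν ν‖ ^ 2 : ℝ) : EReal)
              + ((lamν ν / 2 * ∑ i, ‖ξ i + v i - ξν ν i‖ ^ 2 : ℝ) : EReal)) atTop (𝓝 T) := by
            have hTr : T = ((T.toReal : ℝ) : EReal) := (EReal.coe_toReal hTt hTb).symm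
            have hfn : (fun ν => T + ((θν ν / 2 * ‖p - pν ν‖ ^ 2 : ℝ) : EReal)
                + ((lamν ν / 2 * ∑ i, ‖ξ i + v i - ξν ν i‖ ^ 2 : ℝ) : EReal))
                = fun ν => (((T.toReal + θν ν / 2 * ‖p - pν ν‖ ^ 2
                    + lamν ν / 2 * ∑ i, ‖ξ i + v i - ξν ν i‖ ^ 2 : ℝ)) : EReal) := by
              funext ν
              rw [EReal.coe_add, EReal.coe_add, ← hTr]
            rw [hfn, hTr]
            rw [EReal.tendsto_coe]
            have := (tendsto_const_nhds (x := T.toReal) (f := atTop (α := ℕ))).add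
              (t1.add t2)
            simpa using this.congr fun ν => by ring
          exact le_of_eq htend.limsup_eq
    · exact ⟨fun _ => u, fun _ => v, fun _ => x, tendsto_const_nhds, tendsto_const_nhds,
        tendsto_const_nhds, by rw [if_neg h0]; exact le_top⟩
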